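/- Let 1 ≤ p ≤ 2, let (u_i)_{i=1}^m be unit vectors in R^n and (c_i)_{i=1}^m positive real numbers satisfying Σ_{i=1}^m c_i u_i⊗u_i = I_n. Then for every x ∈ R^n, Σ_{i=1}^m c_i |⟨u_i, x⟩|^p ≤ n^{1 − p/2} |x|^p, where |x| is the Euclidean norm of x. Consequently the set {x : Σ_{i=1}^m c_i |⟨u_i,x⟩|^p ≤ 1} contains the Euclidean ball of radius n^{1/2 − 1/p}. -/
import Mathlib


open MeasureTheory Finset Metric
open scoped RealInnerProductSpace

/-- For `1 ≤ p ≤ 2` and a John decomposition `Σ cᵢ uᵢ⊗uᵢ = Iₙ`,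
`Σ cᵢ |⟨uᵢ,x⟩|ᵖ ≤ n^{1−p/2} |x|ᵖ` for all `x`; consequently the unit ball of this
expression contains the Euclidean ball of radius `n^{1/2−1/p}`. -/
theorem statement10 {n m : ℕ} (p : ℝ) (hp1 : 1 ≤ p) (hp2 : p ≤ 2)
    (u : Fin m → EuclideanSpace ℝ (Fin n)) (c : Fin m → ℝ)
    (hu : ∀ i, ‖u i‖ = 1) (hc : ∀ i, 0 < c i)
    (hJohn : ∀ x : EuclideanSpace ℝ (Fin n), ∑ i, c i • ⟪u i, x⟫ • u i = x) :
    (∀ x : EuclideanSpace ℝ (Fin n),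
        ∑ i, c i * |⟪u i, x⟫| ^ p ≤ (n : ℝ) ^ (1 - p / 2) * ‖x‖ ^ p) ∧
      Metric.closedBall (0 : EuclideanSpace ℝ (Fin n)) ((n : ℝ) ^ ((1 : ℝ) / 2 - 1 / p)) ⊆
        {x : EuclideanSpace ℝ (Fin n) | ∑ i, c i * |⟪u i, x⟫| ^ p ≤ 1} := by
  have hp0 : (0 : ℝ) < p := lt_of_lt_of_le one_pos hp1
  -- Parseval-type identity from the John decomposition
  have key : ∀ x : EuclideanSpace ℝ (Fin n),
      ∑ i, c i * ⟪u i, x⟫ ^ 2 = ‖x‖ ^ 2 := by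
    intro x
    have h := hJohn x
    calc ∑ i, c i * ⟪u i, x⟫ ^ 2
        = ⟪∑ i, c i • ⟪u i, x⟫ • u i, x⟫ := by
          rw [sum_inner]
          refine Finset.sum_congr rfl fun i _ => ?_
          rw [real_inner_smul_left, real_inner_smul_left]; ring
      _ = ‖x‖ ^ 2 := by rw [h, real_inner_self_eq_norm_sq]
  -- main case split on n = 0
  rcases Nat.eq_zero_or_pos n with hn | hn
  · -- trivial case: the space is trivial, so m = 0
    have hm : m = 0 := by
      by_contra hm
      have : (0 : ℕ) < m := Nat.pos_of_ne_zero hm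
      have h1 := hu ⟨0, this⟩
      subst hn
      have : u ⟨0, this⟩ = 0 := Subsingleton.elim _ _
      rw [this, norm_zero] at h1
      norm_num at h1
    subst hm
    constructor
    · intro x
      simp only [Finset.univ_eq_empty, Finset.sum_empty]
      positivity
    · intro x _
      simp only [Set.mem_setOf_eq, Finset.univ_eq_empty, Finset.sum_empty]
      norm_num
  · have hn' : (0 : ℝ) < n := by exact_mod_cast hn
    -- trace identity : ∑ c i = n
    have hcsum : ∑ i, c i = n := by
      classical
      let b := EuclideanSpace.basisFun (Fin n) ℝ
      have hb : ∀ i, ∑ j, ⟪u i, b j⟫ ^ 2 = 1 := by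
        intro i
        have := b.sum_inner_mul_inner (u i) (u i)
        rw [real_inner_self_eq_norm_sq, hu i] at this
        calc ∑ j, ⟪u i, b j⟫ ^ 2 = ∑ j, ⟪u i, b j⟫ * ⟪b j, u i⟫ := by
              refine Finset.sum_congr rfl fun j _ => ?_
              rw [real_inner_comm (b j) (u i)]; ring
          _ = 1 := by rw [this]; norm_num
      have h2 : ∀ j, ∑ i, c i * ⟪u i, (b j : EuclideanSpace ℝ (Fin n))⟫ ^ 2 = 1 := by
        intro j
        rw [key (b j), b.orthonormal.1 j, one_pow]
      calc ∑ i, c i = ∑ i, c i * ∑ j, ⟪u i, b j⟫ ^ 2 := by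
            refine Finset.sum_congr rfl fun i _ => ?_
            rw [hb i, mul_one]
        _ = ∑ i, ∑ j, c i * ⟪u i, b j⟫ ^ 2 := by
            refine Finset.sum_congr rfl fun i _ => ?_
            rw [Finset.mul_sum]
        _ = ∑ j, ∑ i, c i * ⟪u i, b j⟫ ^ 2 := Finset.sum_comm
        _ = ∑ j : Fin n, (1 : ℝ) := Finset.sum_congr rfl fun j _ => h2 j
        _ = n := by simp
    -- core inequality
    have main : ∀ x : EuclideanSpace ℝ (Fin n),
        ∑ i, c i * |⟪u i, x⟫| ^ p ≤ (n : ℝ) ^ (1 - p / 2) * ‖x‖ ^ p := by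
      intro x
      set w : Fin m → ℝ := fun i => c i / n with hw_def
      set z : Fin m → ℝ := fun i => |⟪u i, x⟫| ^ p with hz_def
      have hw : ∀ i ∈ Finset.univ, 0 ≤ w i := fun i _ => by
        have := (hc i).le; positivity
      have hw' : ∑ i, w i = 1 := by
        simp only [hw_def, ← Finset.sum_div, hcsum]
        field_simp
      have hz : ∀ i ∈ Finset.univ, 0 ≤ z i := fun i _ => by
        simp only [hz_def]; positivity
      have hq : (1 : ℝ) ≤ 2 / p := by
        rw [le_div_iff₀ hp0]; linarith
      have hH := Real.arith_mean_le_rpow_mean Finset.univ w z hw hw' hz hq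
      have hzq : ∀ i, z i ^ (2 / p) = ⟪u i, x⟫ ^ 2 := by
        intro i
        simp only [hz_def]
        rw [← Real.rpow_mul (abs_nonneg _)]
        have hpe : p * (2 / p) = 2 := by field_simp
        rw [hpe, show (2 : ℝ) = ((2 : ℕ) : ℝ) by norm_num, Real.rpow_natCast, sq_abs]
      have hsum2 : ∑ i, w i * z i ^ (2 / p) = ‖x‖ ^ 2 / n := by
        calc ∑ i, w i * z i ^ (2 / p) = ∑ i, (c i * ⟪u i, x⟫ ^ 2) / n := by
              refine Finset.sum_congr rfl fun i _ => ?_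
              rw [hzq i, hw_def]; ring
          _ = (∑ i, c i * ⟪u i, x⟫ ^ 2) / n := by rw [← Finset.sum_div]
          _ = ‖x‖ ^ 2 / n := by rw [key x]
      rw [hsum2] at hH
      have h1d : (1 : ℝ) / (2 / p) = p / 2 := by
        field_simp
      rw [h1d] at hH
      -- multiply both sides by n
      have hfin : (n : ℝ) * (‖x‖ ^ 2 / n) ^ (p / 2)
          = (n : ℝ) ^ (1 - p / 2) * ‖x‖ ^ p := by
        rw [Real.div_rpow (by positivity) hn'.le]
        rw [← Real.rpow_natCast ‖x‖ 2, ← Real.rpow_mul (norm_nonneg x)]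
        have : ((2 : ℕ) : ℝ) * (p / 2) = p := by push_cast; ring
        rw [this]
        rw [Real.rpow_sub hn', Real.rpow_one]
        field_simp
      calc ∑ i, c i * |⟪u i, x⟫| ^ p = (n : ℝ) * ∑ i, w i * z i := by
            rw [Finset.mul_sum]
            refine Finset.sum_congr rfl fun i _ => ?_
            simp only [hw_def, hz_def]
            field_simp
        _ ≤ (n : ℝ) * (‖x‖ ^ 2 / n) ^ (p / 2) := by
            exact mul_le_mul_of_nonneg_left hH hn'.le
        _ = (n : ℝ) ^ (1 - p / 2) * ‖x‖ ^ p := hfin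
    refine ⟨main, ?_⟩
    intro x hx
    simp only [Metric.mem_closedBall, dist_zero_right] at hx
    have hxn : ‖x‖ ≤ (n : ℝ) ^ ((1 : ℝ) / 2 - 1 / p) := hx
    have h2 : ‖x‖ ^ p ≤ ((n : ℝ) ^ ((1 : ℝ) / 2 - 1 / p)) ^ p :=
      Real.rpow_le_rpow (norm_nonneg x) hxn hp0.le
    have h3 : (n : ℝ) ^ (1 - p / 2) * ((n : ℝ) ^ ((1 : ℝ) / 2 - 1 / p)) ^ p = 1 := by
      rw [← Real.rpow_mul hn'.le, ← Real.rpow_add hn']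
      have he : 1 - p / 2 + (1 / 2 - 1 / p) * p = 0 := by
        field_simp
        ring
      rw [he, Real.rpow_zero]
    show ∑ i, c i * |⟪u i, x⟫| ^ p ≤ 1
    calc ∑ i, c i * |⟪u i, x⟫| ^ p ≤ (n : ℝ) ^ (1 - p / 2) * ‖x‖ ^ p := main x
      _ ≤ (n : ℝ) ^ (1 - p / 2) * ((n : ℝ) ^ ((1 : ℝ) / 2 - 1 / p)) ^ p :=
          mul_le_mul_of_nonneg_left h2 (Real.rpow_nonneg hn'.le _)
      _ = 1 := h3
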